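/- Let 0 < λ₁ < λₙ, Ψ₁, Ψₙ > 0, μ₁, μₙ ∈ ℝ not both zero, and α = (Ψ₁μ₁² + Ψₙμₙ²)/(λ₁Ψ₁μ₁² + λₙΨₙμₙ²). Consider ε = μ₁/λ₁·ξ₁ + μₙ/λₙ·ξₙ where ξ₁, ξₙ are orthonormal, g = μ₁ξ₁ + μₙξₙ, and ε⁺ = ε − αg. Then ε⁺ = (λₙ−λ₁)(λₙΨₙμₙ²μ₁ξ₁ − λ₁Ψ₁μ₁²μₙξₙ) / (λ₁λₙ(λ₁Ψ₁μ₁² + λₙΨₙμₙ²)). -/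

import Mathlib

open RealInnerProductSpace

theorem error_update {E : Type*} [NormedAddCommGroup E] [InnerProductSpace ℝ E]
    (lam1 lamn Ψ₁ Ψₙ μ₁ μₙ : ℝ) (h1 : 0 < lam1) (h1n : lam1 < lamn)
    (hΨ1 : 0 < Ψ₁) (hΨn : 0 < Ψₙ) (hμ : ¬(μ₁ = 0 ∧ μₙ = 0))
    (ξ₁ ξₙ : E) (hn1 : ‖ξ₁‖ = 1) (hnn : ‖ξₙ‖ = 1) (horth : (inner ℝ ξ₁ ξₙ : ℝ) = 0)
    (α : ℝ) (hα : α = (Ψ₁ * μ₁ ^ 2 + Ψₙ * μₙ ^ 2) / (lam1 * Ψ₁ * μ₁ ^ 2 + lamn * Ψₙ * μₙ ^ 2))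
    (ε g ε' : E)
    (hε : ε = (μ₁ / lam1) • ξ₁ + (μₙ / lamn) • ξₙ)
    (hg : g = μ₁ • ξ₁ + μₙ • ξₙ)
    (hε' : ε' = ε - α • g) :
    ε' = ((lamn - lam1) * (lamn * Ψₙ * μₙ ^ 2 * μ₁) /
        (lam1 * lamn * (lam1 * Ψ₁ * μ₁ ^ 2 + lamn * Ψₙ * μₙ ^ 2))) • ξ₁ -
      ((lamn - lam1) * (lam1 * Ψ₁ * μ₁ ^ 2 * μₙ) /
        (lam1 * lamn * (lam1 * Ψ₁ * μ₁ ^ 2 + lamn * Ψₙ * μₙ ^ 2))) • ξₙ := by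
  have hD : lam1 * Ψ₁ * μ₁ ^ 2 + lamn * Ψₙ * μₙ ^ 2 ≠ 0 := by
    have hlp : 0 < lamn := h1.trans h1n
    rcases not_and_or.mp hμ with h | h
    · have h2 : 0 < lam1 * Ψ₁ * μ₁ ^ 2 := by positivity
      nlinarith [sq_nonneg μₙ, mul_pos (h1.trans h1n) hΨn]
    · have h2 : 0 < lamn * Ψₙ * μₙ ^ 2 := by positivity
      nlinarith [sq_nonneg μ₁, mul_pos h1 hΨ1]
  have hl1 : lam1 ≠ 0 := h1.ne'
  have hln : lamn ≠ 0 := (h1.trans h1n).ne'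
  have hD2 : μ₁ ^ 2 * lam1 * Ψ₁ + Ψₙ * μₙ ^ 2 * lamn ≠ 0 := by
    convert hD using 1; ring
  have hD3 : μₙ ^ 2 * lamn * Ψₙ + Ψ₁ * μ₁ ^ 2 * lam1 ≠ 0 := by
    convert hD using 1; ring
  subst hε' hε hg hα
  match_scalars
  · field_simp
    ring
  · field_simp
    linear_combination (-μₙ) * mul_inv_cancel₀ hD3
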